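/- The group G = A(n,θ) has exactly 2(2^n − 1) conjugacy classes of elements of order 4. -/

import Mathlib

noncomputable section

abbrev Fq (n : ℕ) : Type := GaloisField 2 n

instance (n : ℕ) : Fintype (Fq n) := Fintype.ofFinite _

@[ext] structure SuzukiA (n : ℕ) (θ : Fq n ≃+* Fq n) where
  a : Fq n
  b : Fq n

namespace SuzukiA

variable {n : ℕ} {θ : Fq n ≃+* Fq n}

instance : Mul (SuzukiA n θ) := ⟨fun x y => ⟨x.a + y.a, x.b + y.b + x.a * θ y.a⟩⟩
instance : One (SuzukiA n θ) := ⟨⟨0, 0⟩⟩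
instance : Inv (SuzukiA n θ) := ⟨fun x => ⟨x.a, x.b + x.a * θ x.a⟩⟩

theorem mul_def (x y : SuzukiA n θ) :
    x * y = ⟨x.a + y.a, x.b + y.b + x.a * θ y.a⟩ := rfl

@[simp] theorem one_a : (1 : SuzukiA n θ).a = 0 := rfl
@[simp] theorem one_b : (1 : SuzukiA n θ).b = 0 := rfl

instance : Group (SuzukiA n θ) where
  mul_assoc x y z := by ext <;> simp [mul_def, map_add] <;> ring
  one_mul x := by ext <;> simp [mul_def]
  mul_one x := by ext <;> simp [mul_def]
  inv_mul_cancel x := by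
    have h2 : (2 : Fq n) = 0 := by
      have := CharP.cast_eq_zero (Fq n) 2
      exact_mod_cast this
    show (⟨x.a, x.b + x.a * θ x.a⟩ * x : SuzukiA n θ) = 1
    ext
    · show x.a + x.a = 0
      linear_combination x.a * h2
    · show x.b + x.a * θ x.a + x.b + x.a * θ x.a = 0
      linear_combination (x.b + x.a * θ x.a) * h2

instance : Fintype (SuzukiA n θ) :=
  Fintype.ofEquiv (Fq n × Fq n)
    { toFun := fun p => ⟨p.1, p.2⟩
      invFun := fun x => (x.a, x.b)
      left_inv := fun _ => rfl
      right_inv := fun _ => rfl }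

end SuzukiA

section Work
open SuzukiA

variable {n : ℕ} {θ : Fq n ≃+* Fq n}

lemma fq_two_eq_zero : (2 : Fq n) = 0 := by
  exact_mod_cast CharP.cast_eq_zero (Fq n) 2

lemma theta_fix (hθ : ∀ σ : Fq n ≃+* Fq n, σ ∈ Subgroup.zpowers θ)
    {c : Fq n} (hc : θ c = c) : c = 0 ∨ c = 1 := by
  have hinv : θ⁻¹ c = c := by
    conv_lhs => rw [← hc]
    exact θ.symm_apply_apply c
  have hpow : ∀ (σ : Fq n ≃+* Fq n), σ c = c → ∀ m : ℕ, (σ ^ m) c = c := by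
    intro σ hσ m
    induction m with
    | zero => rfl
    | succ k ih =>
      rw [pow_succ]
      show (σ ^ k) (σ c) = c
      rw [hσ, ih]
  have hzpow : ∀ k : ℤ, (θ ^ k) c = c := by
    intro k
    rcases k with m | m
    · rw [Int.ofNat_eq_coe, zpow_natCast]; exact hpow θ hc m
    · rw [zpow_negSucc, ← inv_pow]; exact hpow θ⁻¹ hinv (m + 1)
  obtain ⟨k, hk⟩ := Subgroup.mem_zpowers_iff.mp (hθ (frobeniusEquiv (Fq n) 2))
  have hc2 : c ^ 2 = c := by
    have : (frobeniusEquiv (Fq n) 2) c = c := by rw [← hk]; exact hzpow k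
    rwa [frobeniusEquiv_apply, frobenius_def] at this
  have : c * (c - 1) = 0 := by linear_combination hc2
  rcases mul_eq_zero.mp this with h | h
  · exact Or.inl h
  · exact Or.inr (by linear_combination h)

def phi (θ : Fq n ≃+* Fq n) (a : Fq n) : Fq n →+ Fq n where
  toFun c := c * θ a + a * θ c
  map_zero' := by simp
  map_add' c d := by simp only [map_add]; ring

lemma phi_apply (a c : Fq n) : phi θ a c = c * θ a + a * θ c := rfl

lemma theta_ne_zero {a : Fq n} (ha : a ≠ 0) : θ a ≠ 0 := by
  intro h0
  exact ha (θ.injective (by rw [h0, map_zero]))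

lemma phi_eq_zero_iff (hθ : ∀ σ : Fq n ≃+* Fq n, σ ∈ Subgroup.zpowers θ)
    {a : Fq n} (ha : a ≠ 0) (c : Fq n) :
    phi θ a c = 0 ↔ c = 0 ∨ c = a := by
  constructor
  · intro h
    rw [phi_apply] at h
    by_cases hc : c = 0
    · exact Or.inl hc
    · right
      have hca : c * θ a = a * θ c := by
        linear_combination h - a * θ c * (fq_two_eq_zero (n := n))
      have hfix : θ (c * a⁻¹) = c * a⁻¹ := by
        rw [map_mul, map_inv₀, ← div_eq_mul_inv, ← div_eq_mul_inv,
          div_eq_div_iff (theta_ne_zero ha) ha]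
        linear_combination -hca
      rcases theta_fix hθ hfix with h1 | h1
      · rcases mul_eq_zero.mp h1 with h2 | h2
        · exact absurd h2 hc
        · exact absurd (inv_eq_zero.mp h2) ha
      · field_simp at h1
        exact h1
  · intro h
    rcases h with h | h
    · rw [h, phi_apply]
      simp
    · rw [h, phi_apply]
      linear_combination a * θ a * (fq_two_eq_zero (n := n))

lemma inv_def (x : SuzukiA n θ) : x⁻¹ = ⟨x.a, x.b + x.a * θ x.a⟩ := rfl

lemma conj_formula (g x : SuzukiA n θ) :
    g * x * g⁻¹ = ⟨x.a, x.b + phi θ x.a g.a⟩ := by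
  ext
  · show g.a + x.a + g.a = x.a
    linear_combination g.a * (fq_two_eq_zero (n := n))
  · show g.b + x.b + g.a * θ x.a + (g.b + g.a * θ g.a) + (g.a + x.a) * θ g.a
      = x.b + (g.a * θ x.a + x.a * θ g.a)
    linear_combination (g.b + g.a * θ g.a) * (fq_two_eq_zero (n := n))

lemma isConj_iff' (x y : SuzukiA n θ) :
    IsConj x y ↔ x.a = y.a ∧ ∃ c, y.b = x.b + phi θ x.a c := by
  rw [isConj_iff]
  constructor
  · rintro ⟨g, rfl⟩
    rw [conj_formula]
    exact ⟨rfl, g.a, rfl⟩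
  · rintro ⟨ha, c, hb⟩
    refine ⟨⟨c, 0⟩, ?_⟩
    rw [conj_formula]
    ext
    · exact ha
    · exact hb.symm

lemma sq_eq (x : SuzukiA n θ) : x * x = ⟨0, x.a * θ x.a⟩ := by
  ext
  · show x.a + x.a = 0
    linear_combination x.a * (fq_two_eq_zero (n := n))
  · show x.b + x.b + x.a * θ x.a = x.a * θ x.a
    linear_combination x.b * (fq_two_eq_zero (n := n))

lemma orderOf_eq_four_iff (x : SuzukiA n θ) : orderOf x = 4 ↔ x.a ≠ 0 := by
  constructor
  · intro h hx
    have hsq : x * x = 1 := by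
      rw [sq_eq, hx]
      ext <;> simp
    have hdvd : orderOf x ∣ 2 := orderOf_dvd_of_pow_eq_one (by rw [pow_two]; exact hsq)
    rw [h] at hdvd
    exact absurd hdvd (by norm_num)
  · intro hx
    have hsq : x * x ≠ 1 := by
      intro h
      rw [sq_eq] at h
      have hb : x.a * θ x.a = 0 := congrArg SuzukiA.b h
      rcases mul_eq_zero.mp hb with h2 | h2
      · exact hx h2
      · exact theta_ne_zero hx h2
    have h4 : x ^ 4 = 1 := by
      have h44 : x ^ 4 = (x * x) * (x * x) := by
        rw [show (4 : ℕ) = 2 * 2 from rfl, pow_mul, pow_two, pow_two]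
      rw [h44, sq_eq, sq_eq]
      ext <;> simp
    have hdvd : orderOf x ∣ 4 := orderOf_dvd_of_pow_eq_one h4
    have hmem : orderOf x ∈ Nat.divisors 4 := Nat.mem_divisors.mpr ⟨hdvd, by norm_num⟩
    have htri : orderOf x = 1 ∨ orderOf x = 2 ∨ orderOf x = 4 := by
      have : Nat.divisors 4 = {1, 2, 4} := by decide
      rw [this] at hmem
      simpa using hmem
    rcases htri with h | h | h
    · exact absurd (by rw [orderOf_eq_one_iff.mp h]; exact one_mul 1) hsq
    · exact absurd (by rw [← pow_two]; rw [← h]; exact pow_orderOf_eq_one x) hsq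
    · exact h

lemma mem_S_iff (x : SuzukiA n θ) :
    ConjClasses.mk x ∈ {c : ConjClasses (SuzukiA n θ) | ∃ y ∈ c.carrier, orderOf y = 4}
      ↔ x.a ≠ 0 := by
  simp only [Set.mem_setOf_eq]
  constructor
  · rintro ⟨y, hy, h4⟩
    rw [ConjClasses.mem_carrier_iff_mk_eq, ConjClasses.mk_eq_mk_iff_isConj] at hy
    rw [← ((isConj_iff' y x).mp hy).1]
    exact (orderOf_eq_four_iff y).mp h4
  · intro hx
    exact ⟨x, ConjClasses.mem_carrier_iff_mk_eq.mpr rfl, (orderOf_eq_four_iff x).mpr hx⟩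

def Phi (θ : Fq n ≃+* Fq n) :
    ConjClasses (SuzukiA n θ) → Σ a : Fq n, Fq n ⧸ (phi θ a).range :=
  Quotient.lift (fun x : SuzukiA n θ => ⟨x.a, QuotientAddGroup.mk x.b⟩) (by
    rintro ⟨a, b⟩ ⟨a', b'⟩ h
    replace h : IsConj (⟨a, b⟩ : SuzukiA n θ) ⟨a', b'⟩ := h
    obtain ⟨ha, c, hb⟩ := (isConj_iff' _ _).mp h
    dsimp only at ha hb ⊢
    subst ha
    have hq : (QuotientAddGroup.mk b : Fq n ⧸ (phi θ a).range) = QuotientAddGroup.mk b' := by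
      rw [QuotientAddGroup.eq]
      exact AddMonoidHom.mem_range.mpr ⟨c, by rw [hb, neg_add_cancel_left]⟩
    rw [hq])

lemma Phi_mk (x : SuzukiA n θ) :
    Phi θ (ConjClasses.mk x) = ⟨x.a, QuotientAddGroup.mk x.b⟩ := rfl

lemma Phi_bijective : Function.Bijective (Phi θ) := by
  constructor
  · intro c₁ c₂ h
    obtain ⟨x, rfl⟩ := ConjClasses.mk_surjective c₁
    obtain ⟨y, rfl⟩ := ConjClasses.mk_surjective c₂
    obtain ⟨a, b⟩ := x
    obtain ⟨a', b'⟩ := y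
    have h' : (⟨a, QuotientAddGroup.mk b⟩ : Σ a : Fq n, Fq n ⧸ (phi θ a).range)
        = ⟨a', QuotientAddGroup.mk b'⟩ := h
    obtain ⟨h1, h2⟩ := Sigma.mk.inj_iff.mp h'
    subst h1
    rw [heq_iff_eq, QuotientAddGroup.eq] at h2
    obtain ⟨c, hc⟩ := AddMonoidHom.mem_range.mp h2
    rw [ConjClasses.mk_eq_mk_iff_isConj, isConj_iff']
    exact ⟨rfl, c, by rw [hc, add_neg_cancel_left]⟩
  · rintro ⟨a, q⟩
    obtain ⟨b, rfl⟩ := QuotientAddGroup.mk_surjective q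
    exact ⟨ConjClasses.mk ⟨a, b⟩, rfl⟩

end Work

open SuzukiA in
theorem stmt12 (n : ℕ) (hn : 1 < n) (hodd : Odd n) (θ : Fq n ≃+* Fq n)
    (hθ : ∀ σ : Fq n ≃+* Fq n, σ ∈ Subgroup.zpowers θ) :
    Nat.card {c : ConjClasses (SuzukiA n θ) | ∃ x ∈ c.carrier, orderOf x = 4} =
      2 * (2 ^ n - 1) := by
  classical
  have hn0 : n ≠ 0 := by omega
  have hcard : Nat.card (Fq n) = 2 ^ n := GaloisField.card 2 n hn0
  have hquot : ∀ a : Fq n, a ≠ 0 → Nat.card (Fq n ⧸ (phi θ a).range) = 2 := by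
    intro a ha
    have hker : Nat.card (phi θ a).ker = 2 := by
      have hs : ((phi θ a).ker : Set (Fq n)) = {0, a} := by
        ext c
        simp only [SetLike.mem_coe, AddMonoidHom.mem_ker, phi_eq_zero_iff hθ ha,
          Set.mem_insert_iff, Set.mem_singleton_iff]
      rw [← SetLike.coe_sort_coe, hs, Nat.card_coe_set_eq, Set.ncard_pair (Ne.symm ha)]
    have hrange : Nat.card (phi θ a).range = 2 ^ (n - 1) := by
      have h1 := AddSubgroup.card_eq_card_quotient_mul_card_addSubgroup (phi θ a).ker
      have h2 : Nat.card (Fq n ⧸ (phi θ a).ker) = Nat.card (phi θ a).range :=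
        Nat.card_congr (QuotientAddGroup.quotientKerEquivRange (phi θ a)).toEquiv
      rw [hcard, h2, hker] at h1
      have hpow : 2 ^ n = 2 ^ (n - 1) * 2 := by
        rw [← pow_succ]
        congr 1
        omega
      rw [hpow] at h1
      exact Nat.eq_of_mul_eq_mul_right (by norm_num) h1.symm
    have h1 := AddSubgroup.card_eq_card_quotient_mul_card_addSubgroup (phi θ a).range
    rw [hcard, hrange] at h1
    have hpow : 2 ^ n = 2 * 2 ^ (n - 1) := by
      rw [← pow_succ']
      congr 1
      omega
    rw [hpow] at h1
    exact Nat.eq_of_mul_eq_mul_right (Nat.pow_pos (by norm_num)) h1.symm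
  let e : ConjClasses (SuzukiA n θ) ≃ Σ a : Fq n, Fq n ⧸ (phi θ a).range :=
    Equiv.ofBijective (Phi θ) Phi_bijective
  have he : ∀ c : ConjClasses (SuzukiA n θ),
      c ∈ {c : ConjClasses (SuzukiA n θ) | ∃ x ∈ c.carrier, orderOf x = 4} ↔ (e c).1 ≠ 0 := by
    intro c
    obtain ⟨x, rfl⟩ := ConjClasses.mk_surjective c
    exact mem_S_iff x
  let e2 := (Equiv.subtypeEquiv e he).trans
    (Equiv.subtypeSigmaEquiv (fun a : Fq n => Fq n ⧸ (phi θ a).range) (fun a => a ≠ 0))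
  rw [Nat.card_congr e2]
  letI : ∀ a : Fq n, Fintype (Fq n ⧸ (phi θ a).range) := fun a => Fintype.ofFinite _
  rw [Nat.card_eq_fintype_card, Fintype.card_sigma]
  have hterm : ∀ x : {a : Fq n // a ≠ 0},
      Fintype.card (Fq n ⧸ (phi θ (x : Fq n)).range) = 2 := by
    intro x
    rw [← Nat.card_eq_fintype_card]
    exact hquot x.1 x.2
  rw [Finset.sum_congr rfl (fun x _ => hterm x), Finset.sum_const, smul_eq_mul,
    Finset.card_univ]
  have hsub : Fintype.card {a : Fq n // a ≠ 0} = 2 ^ n - 1 := by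
    rw [Fintype.card_subtype_compl, Fintype.card_subtype_eq, ← Nat.card_eq_fintype_card, hcard]
  rw [hsub, Nat.mul_comm]
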